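/- Let G_0 be a finite set of automorphisms of a K-algebra R forming part of a locally finite family (i.e., for every finitely generated K-submodule V, the smallest G_0-stable submodule containing V is finitely generated), and let D_0 be a finite set of skew derivations. Then for every finitely generated K-submodule V of R and every k ≥ 0, the sum Σ_{n ≥ k} Δ_{n,k}(V) is contained in a finitely generated G_0-stable K-submodule of R, where Δ_{n,k} is the set of compositions of n maps from G_0 ∪ D_0 with exactly k factors from D_0. -/

import Mathlib

/-- Auxiliary list form of the main theorem. -/
theorem stmt8_list {K R ι : Type*} [CommRing K] [Ring R] [Algebra K R] [Finite ι]
    (σ : ι → R ≃ₐ[K] R) (δ : ι → R →ₗ[K] R)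
    (hlf : ∀ V : Submodule K R, V.FG → ∃ W : Submodule K R, W.FG ∧ V ≤ W ∧
      ∀ i, W.map (σ i).toLinearMap = W) :
    ∀ (k : ℕ) (V : Submodule K R), V.FG →
      ∃ W : Submodule K R, W.FG ∧ (∀ i, W.map (σ i).toLinearMap = W) ∧
        ∀ l : List (ι × Bool), l.countP (fun p => p.2) = k →
          ∀ v ∈ V,
            (l.map fun p => (if p.2 then δ p.1
              else (σ p.1).toLinearMap : Module.End K R)).prod v ∈ W := by
  intro k
  induction k with
  | zero =>
    intro V hV
    obtain ⟨W, hWfg, hVW, hWst⟩ := hlf V hV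
    refine ⟨W, hWfg, hWst, ?_⟩
    intro l
    induction l with
    | nil => intro _ v hv; simpa using hVW hv
    | cons p l ih =>
      intro hc v hv
      simp only [List.countP_cons] at hc
      have hp2 : p.2 = false := by
        cases hb : p.2 <;> simp [hb] at hc ⊢
      have hl : l.countP (fun p => p.2) = 0 := by omega
      have hmem := ih hl v hv
      simp only [List.map_cons, List.prod_cons, Module.End.mul_apply, hp2, if_false]
      rw [← hWst p.1]
      exact ⟨_, hmem, rfl⟩
  | succ k IH =>
    intro V hV
    obtain ⟨W, hWfg, hWst, hW⟩ := IH V hV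
    have hV' : (⨆ j : ι, W.map (δ j)).FG :=
      Submodule.fg_iSup _ fun j => hWfg.map _
    obtain ⟨W', hW'fg, hVW', hW'st⟩ := hlf _ hV'
    refine ⟨W', hW'fg, hW'st, ?_⟩
    intro l
    induction l with
    | nil => intro hc; simp at hc
    | cons p l ih =>
      intro hc v hv
      simp only [List.countP_cons] at hc
      simp only [List.map_cons, List.prod_cons, Module.End.mul_apply]
      cases hb : p.2 with
      | false =>
        have hl : l.countP (fun p => p.2) = k + 1 := by
          simp only [hb, Bool.false_eq_true, if_false, if_true] at hc; omega
        have hmem := ih hl v hv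
        simp only [hb, Bool.false_eq_true, if_false]
        rw [← hW'st p.1]
        exact ⟨_, hmem, rfl⟩
      | true =>
        have hl : l.countP (fun p => p.2) = k := by
          simp only [hb, Bool.false_eq_true, if_false, if_true] at hc; omega
        have hmem := hW l hl v hv
        simp only [hb, if_true]
        refine hVW' (le_iSup (fun j => W.map (δ j)) p.1 ?_)
        exact ⟨_, hmem, rfl⟩

theorem stmt8 {K R ι : Type*} [CommRing K] [Ring R] [Algebra K R] [Finite ι]
    (σ : ι → R ≃ₐ[K] R) (δ : ι → R →ₗ[K] R)
    (hskew : ∀ i (x y : R), δ i (x * y) = δ i x * y + σ i x * δ i y)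
    (hlf : ∀ V : Submodule K R, V.FG → ∃ W : Submodule K R, W.FG ∧ V ≤ W ∧
      ∀ i, W.map (σ i).toLinearMap = W) :
    ∀ (k : ℕ) (V : Submodule K R), V.FG →
      ∃ W : Submodule K R, W.FG ∧ (∀ i, W.map (σ i).toLinearMap = W) ∧
        ∀ (n : ℕ) (w : Fin n → ι × Bool), Nat.card {i // (w i).2 = true} = k →
          ∀ v ∈ V,
            (List.ofFn fun i => (if (w i).2 then δ (w i).1
              else (σ (w i).1).toLinearMap : Module.End K R)).prod v ∈ W := by
  intro k V hV
  obtain ⟨W, hWfg, hWst, hW⟩ := stmt8_list σ δ hlf k V hV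
  refine ⟨W, hWfg, hWst, ?_⟩
  intro n w hcard v hv
  have key : ∀ (m : ℕ) (u : Fin m → ι × Bool),
      (List.ofFn u).countP (fun p => p.2) = ∑ i, if (u i).2 then 1 else 0 := by
    intro m
    induction m with
    | zero => intro u; simp
    | succ m ihm =>
      intro u
      rw [List.ofFn_succ, List.countP_cons, Fin.sum_univ_succ, ihm]
      by_cases h : (u 0).2 <;> simp [h] <;> ring
  have hcount : (List.ofFn w).countP (fun p => p.2) = k := by
    rw [← hcard, Nat.card_eq_fintype_card, Fintype.card_subtype, Finset.card_filter, key]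
  have := hW (List.ofFn w) hcount v hv
  simpa [List.map_ofFn, Function.comp_def] using this
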